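/- arXiv:2508.17396 — 2 statements merged into one kernel-verified Lean document; each statement's English description precedes it below -/
import Mathlib

section
/- On ℝ⁴ with coordinates (s, x, y, z), let λ = e^s α₊ + e^{−s} α₋ where α₊ = e^z dx + e^{−z} dy and α₋ = −e^z dx + e^{−z} dy are 1-forms on ℝ³ (pulled back to ℝ⁴). Then dλ is a symplectic form on ℝ⁴, i.e. dλ ∧ dλ is nowhere vanishing. -/
/- STATEMENT 7: On ℝ⁴ with coordinates `p = (s, x, y, z)` (so tangent vectors are
`v = (vs, vx, vy, vz)`), let `λ = e^s α₊ + e^{-s} α₋` with `α₊ = e^z dx + e^{-z} dy`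
and `α₋ = -e^z dx + e^{-z} dy`.  Then `dλ` is symplectic: the 4-form `dλ ∧ dλ` is
nowhere vanishing.  Here `dλ(u,v) = D_u(λ(·)(v)) - D_v(λ(·)(u))` and, on a
4-manifold, `(dλ ∧ dλ)(e₀,e₁,e₂,e₃) =
2 (dλ(e₀,e₁)dλ(e₂,e₃) - dλ(e₀,e₂)dλ(e₁,e₃) + dλ(e₀,e₃)dλ(e₁,e₂))` on the standard
basis, so nowhere-vanishing means this value is nonzero at every point. -/

noncomputable section

abbrev P4 : Type := ℝ × ℝ × ℝ × ℝ

/-- `α₊ = e^z dx + e^{-z} dy` (pulled back to ℝ⁴). -/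
def alphaP (p v : P4) : ℝ := Real.exp p.2.2.2 * v.2.1 + Real.exp (-p.2.2.2) * v.2.2.1

/-- `α₋ = -e^z dx + e^{-z} dy` (pulled back to ℝ⁴). -/
def alphaM (p v : P4) : ℝ :=
  -(Real.exp p.2.2.2 * v.2.1) + Real.exp (-p.2.2.2) * v.2.2.1

/-- `λ = e^s α₊ + e^{-s} α₋`. -/
def lamF (p v : P4) : ℝ := Real.exp p.1 * alphaP p v + Real.exp (-p.1) * alphaM p v

/-- `dλ(u,v)` at `p`. -/
def dlam (p u v : P4) : ℝ :=
  fderiv ℝ (fun q => lamF q v) p u - fderiv ℝ (fun q => lamF q u) p v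

def e0 : P4 := (1, 0, 0, 0)
def e1 : P4 := (0, 1, 0, 0)
def e2 : P4 := (0, 0, 1, 0)
def e3 : P4 := (0, 0, 0, 1)


/-- projection onto the first coordinate as a continuous linear map. -/
def pi1 : P4 →L[ℝ] ℝ := ContinuousLinearMap.fst ℝ ℝ (ℝ × ℝ × ℝ)

/-- projection onto the fourth coordinate as a continuous linear map. -/
def pi4 : P4 →L[ℝ] ℝ :=
  (ContinuousLinearMap.snd ℝ ℝ ℝ).comp
    ((ContinuousLinearMap.snd ℝ ℝ (ℝ × ℝ)).comp (ContinuousLinearMap.snd ℝ ℝ (ℝ × ℝ × ℝ)))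

lemma hpi1 (p : P4) : HasFDerivAt (fun q : P4 => q.1) pi1 p := hasFDerivAt_fst

lemma hpi4 (p : P4) : HasFDerivAt (fun q : P4 => q.2.2.2) pi4 p :=
  (hasFDerivAt_snd.comp p (hasFDerivAt_snd.comp p hasFDerivAt_snd))

lemma fder (p v u : P4) :
    fderiv ℝ (fun q => lamF q v) p u =
      (Real.exp p.1 * Real.exp p.2.2.2 * v.2.1 + Real.exp p.1 * Real.exp (-p.2.2.2) * v.2.2.1
        + Real.exp (-p.1) * Real.exp p.2.2.2 * v.2.1
        - Real.exp (-p.1) * Real.exp (-p.2.2.2) * v.2.2.1) * u.1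
      + (Real.exp p.1 * Real.exp p.2.2.2 * v.2.1 - Real.exp p.1 * Real.exp (-p.2.2.2) * v.2.2.1
        - Real.exp (-p.1) * Real.exp p.2.2.2 * v.2.1
        - Real.exp (-p.1) * Real.exp (-p.2.2.2) * v.2.2.1) * u.2.2.2 := by
  have hes : HasFDerivAt (fun q : P4 => Real.exp q.1) (Real.exp p.1 • pi1) p := (hpi1 p).exp
  have hems : HasFDerivAt (fun q : P4 => Real.exp (-q.1)) (Real.exp (-p.1) • (-pi1)) p :=
    ((hpi1 p).neg).exp
  have hez : HasFDerivAt (fun q : P4 => Real.exp q.2.2.2) (Real.exp p.2.2.2 • pi4) p :=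
    (hpi4 p).exp
  have hemz : HasFDerivAt (fun q : P4 => Real.exp (-q.2.2.2)) (Real.exp (-p.2.2.2) • (-pi4)) p :=
    ((hpi4 p).neg).exp
  have hA : HasFDerivAt (fun q : P4 => alphaP q v)
      (v.2.1 • (Real.exp p.2.2.2 • pi4) + v.2.2.1 • (Real.exp (-p.2.2.2) • (-pi4))) p := by
    have := (hez.mul_const v.2.1).add (hemz.mul_const v.2.2.1)
    simpa [alphaP, mul_comm, Pi.add_def] using this
  have hB : HasFDerivAt (fun q : P4 => alphaM q v)
      (-(v.2.1 • (Real.exp p.2.2.2 • pi4)) + v.2.2.1 • (Real.exp (-p.2.2.2) • (-pi4))) p := by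
    have := ((hez.mul_const v.2.1).neg).add (hemz.mul_const v.2.2.1)
    simpa [alphaM, mul_comm, Pi.add_def, Pi.neg_def] using this
  have hL : HasFDerivAt (fun q => lamF q v)
      ((Real.exp p.1 • (v.2.1 • (Real.exp p.2.2.2 • pi4)
          + v.2.2.1 • (Real.exp (-p.2.2.2) • (-pi4)))
        + alphaP p v • (Real.exp p.1 • pi1))
       + (Real.exp (-p.1) • (-(v.2.1 • (Real.exp p.2.2.2 • pi4))
          + v.2.2.1 • (Real.exp (-p.2.2.2) • (-pi4)))
        + alphaM p v • (Real.exp (-p.1) • (-pi1)))) p := by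
    exact (hes.mul hA).add (hems.mul hB)
  rw [hL.fderiv]
  simp [pi1, pi4, alphaP, alphaM]
  ring

theorem stmt7 :
    ∀ p : P4,
      2 * (dlam p e0 e1 * dlam p e2 e3 - dlam p e0 e2 * dlam p e1 e3
        + dlam p e0 e3 * dlam p e1 e2) ≠ 0 := by
  intro p
  have hzz : Real.exp p.2.2.2 * Real.exp (-p.2.2.2) = 1 := by
    rw [← Real.exp_add]; simp
  simp only [dlam, fder, e0, e1, e2, e3]
  have h1 := Real.exp_pos p.1
  have h2 := Real.exp_pos (-p.1)
  have h3 := Real.exp_pos p.2.2.2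
  have h4 := Real.exp_pos (-p.2.2.2)
  nlinarith [sq_nonneg (Real.exp p.1 - Real.exp (-p.1)),
    sq_nonneg (Real.exp p.1 + Real.exp (-p.1)), mul_pos h1 h2]


end
end

section
/- On ℝ⁴ with coordinates (s, x, y, z), let λ' = e^s α₊ − e^{−s} α₋ where α₊ = e^z dx + e^{−z} dy and α₋ = −e^z dx + e^{−z} dy. Then dλ' is symplectic; combined with the symplecticity of d(e^s α₊ + e^{−s} α₋), this shows (α₊, α₋) is an Anosov-Liouville pair on ℝ³. -/
/- STATEMENT 8: With `α₊ = e^z dx + e^{-z} dy` and `α₋ = -e^z dx + e^{-z} dy` on ℝ³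
(pulled back to ℝ⁴ with coordinates `(s,x,y,z)`), the form `λ' = e^s α₊ - e^{-s} α₋`
has symplectic differential; combined with the symplecticity of
`d(e^s α₊ + e^{-s} α₋)` this shows `(α₊, α₋)` is an Anosov-Liouville pair.
Conventions for `dλ` and for evaluating the 4-form `dλ ∧ dλ` on the standard basis
are as in Statement 7. -/

noncomputable section

/-- `λ' = e^s α₊ - e^{-s} α₋`. -/
def lamF' (p v : P4) : ℝ := Real.exp p.1 * alphaP p v - Real.exp (-p.1) * alphaM p v

def dOf (β : P4 → P4 → ℝ) (p u v : P4) : ℝ :=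
  fderiv ℝ (fun q => β q v) p u - fderiv ℝ (fun q => β q u) p v

def wedgeSq (β : P4 → P4 → ℝ) (p : P4) : ℝ :=
  2 * (dOf β p (1,0,0,0) (0,1,0,0) * dOf β p (0,0,1,0) (0,0,0,1)
    - dOf β p (1,0,0,0) (0,0,1,0) * dOf β p (0,1,0,0) (0,0,0,1)
    + dOf β p (1,0,0,0) (0,0,0,1) * dOf β p (0,1,0,0) (0,0,1,0))

/-- The continuous linear map `u ↦ c * u.1 + d * u.2.2.2`. -/
def Lsz (c d : ℝ) : P4 →L[ℝ] ℝ :=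
  c • (ContinuousLinearMap.fst ℝ ℝ (ℝ × ℝ × ℝ)) +
  d • ((ContinuousLinearMap.snd ℝ ℝ ℝ).comp
        ((ContinuousLinearMap.snd ℝ ℝ (ℝ × ℝ)).comp (ContinuousLinearMap.snd ℝ ℝ (ℝ × ℝ × ℝ))))

lemma Lsz_apply (c d : ℝ) (u : P4) : Lsz c d u = c * u.1 + d * u.2.2.2 := by
  simp [Lsz]

lemma hasE (c d : ℝ) (p : P4) :
    HasFDerivAt (fun q : P4 => Real.exp (c * q.1 + d * q.2.2.2))
      (Real.exp (c * p.1 + d * p.2.2.2) • Lsz c d) p := by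
  have h : HasFDerivAt (fun q : P4 => c * q.1 + d * q.2.2.2) (Lsz c d) p := by
    have := (Lsz c d).hasFDerivAt (x := p)
    rwa [show ⇑(Lsz c d) = fun q : P4 => c * q.1 + d * q.2.2.2 from funext (Lsz_apply c d)] at this
  simpa using h.exp

lemma fderiv_comb (a b c e : ℝ) (p u : P4) :
    fderiv ℝ (fun q : P4 => Real.exp (q.1 + q.2.2.2) * a + Real.exp (-q.1 + q.2.2.2) * b
      + Real.exp (q.1 - q.2.2.2) * c + Real.exp (-q.1 - q.2.2.2) * e) p u
    = Real.exp (p.1 + p.2.2.2) * a * (u.1 + u.2.2.2)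
      + Real.exp (-p.1 + p.2.2.2) * b * (-u.1 + u.2.2.2)
      + Real.exp (p.1 - p.2.2.2) * c * (u.1 - u.2.2.2)
      + Real.exp (-p.1 - p.2.2.2) * e * (-u.1 - u.2.2.2) := by
  have h1 := (hasE 1 1 p).mul_const a
  have h2 := (hasE (-1) 1 p).mul_const b
  have h3 := (hasE 1 (-1) p).mul_const c
  have h4 := (hasE (-1) (-1) p).mul_const e
  have H := ((h1.add h2).add h3).add h4
  have := H.fderiv; simp only [Pi.add_def] at this
  rw [show (fun q : P4 => Real.exp (q.1 + q.2.2.2) * a + Real.exp (-q.1 + q.2.2.2) * b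
      + Real.exp (q.1 - q.2.2.2) * c + Real.exp (-q.1 - q.2.2.2) * e)
    = fun q : P4 => ((Real.exp (1 * q.1 + 1 * q.2.2.2) * a + Real.exp (-1 * q.1 + 1 * q.2.2.2) * b)
      + Real.exp (1 * q.1 + -1 * q.2.2.2) * c) + Real.exp (-1 * q.1 + -1 * q.2.2.2) * e by
      funext q; ring_nf, this]
  simp [Lsz_apply]
  ring

lemma lamF'_eq (q v : P4) : lamF' q v =
    Real.exp (q.1 + q.2.2.2) * v.2.1 + Real.exp (-q.1 + q.2.2.2) * v.2.1
    + Real.exp (q.1 - q.2.2.2) * v.2.2.1 + Real.exp (-q.1 - q.2.2.2) * (-v.2.2.1) := by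
  simp [lamF', alphaP, alphaM, Real.exp_add, Real.exp_sub, Real.exp_neg, sub_eq_add_neg]
  ring

lemma lamF_eq (q v : P4) : lamF q v =
    Real.exp (q.1 + q.2.2.2) * v.2.1 + Real.exp (-q.1 + q.2.2.2) * (-v.2.1)
    + Real.exp (q.1 - q.2.2.2) * v.2.2.1 + Real.exp (-q.1 - q.2.2.2) * v.2.2.1 := by
  simp [lamF, alphaP, alphaM, Real.exp_add, Real.exp_sub, Real.exp_neg, sub_eq_add_neg]
  ring

lemma dOf_lamF' (p u v : P4) : dOf lamF' p u v =
    (Real.exp (p.1 + p.2.2.2) * v.2.1 * (u.1 + u.2.2.2)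
      + Real.exp (-p.1 + p.2.2.2) * v.2.1 * (-u.1 + u.2.2.2)
      + Real.exp (p.1 - p.2.2.2) * v.2.2.1 * (u.1 - u.2.2.2)
      + Real.exp (-p.1 - p.2.2.2) * (-v.2.2.1) * (-u.1 - u.2.2.2))
    - (Real.exp (p.1 + p.2.2.2) * u.2.1 * (v.1 + v.2.2.2)
      + Real.exp (-p.1 + p.2.2.2) * u.2.1 * (-v.1 + v.2.2.2)
      + Real.exp (p.1 - p.2.2.2) * u.2.2.1 * (v.1 - v.2.2.2)
      + Real.exp (-p.1 - p.2.2.2) * (-u.2.2.1) * (-v.1 - v.2.2.2)) := by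
  unfold dOf
  simp only [lamF'_eq]
  rw [fderiv_comb, fderiv_comb]

lemma dOf_lamF (p u v : P4) : dOf lamF p u v =
    (Real.exp (p.1 + p.2.2.2) * v.2.1 * (u.1 + u.2.2.2)
      + Real.exp (-p.1 + p.2.2.2) * (-v.2.1) * (-u.1 + u.2.2.2)
      + Real.exp (p.1 - p.2.2.2) * v.2.2.1 * (u.1 - u.2.2.2)
      + Real.exp (-p.1 - p.2.2.2) * v.2.2.1 * (-u.1 - u.2.2.2))
    - (Real.exp (p.1 + p.2.2.2) * u.2.1 * (v.1 + v.2.2.2)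
      + Real.exp (-p.1 + p.2.2.2) * (-u.2.1) * (-v.1 + v.2.2.2)
      + Real.exp (p.1 - p.2.2.2) * u.2.2.1 * (v.1 - v.2.2.2)
      + Real.exp (-p.1 - p.2.2.2) * u.2.2.1 * (-v.1 - v.2.2.2)) := by
  unfold dOf
  simp only [lamF_eq]
  rw [fderiv_comb, fderiv_comb]

theorem stmt8 :
    (∀ p : P4, wedgeSq lamF' p ≠ 0) ∧ (∀ p : P4, wedgeSq lamF p ≠ 0) := by
  constructor <;> intro p <;>
  · unfold wedgeSq
    first
    | simp only [dOf_lamF']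
    | simp only [dOf_lamF]
    have h1 := Real.exp_pos (p.1 + p.2.2.2)
    have h2 := Real.exp_pos (-p.1 + p.2.2.2)
    have h3 := Real.exp_pos (p.1 - p.2.2.2)
    have h4 := Real.exp_pos (-p.1 - p.2.2.2)
    have e12 : Real.exp (p.1 + p.2.2.2) * Real.exp (-p.1 - p.2.2.2) = 1 := by
      rw [← Real.exp_add]; simp
    have e34 : Real.exp (-p.1 + p.2.2.2) * Real.exp (p.1 - p.2.2.2) = 1 := by
      rw [← Real.exp_add]; simp
    nlinarith [sq_nonneg (Real.exp (p.1 + p.2.2.2) - Real.exp (-p.1 - p.2.2.2)),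
      sq_nonneg (Real.exp (-p.1 + p.2.2.2) - Real.exp (p.1 - p.2.2.2)),
      mul_pos h1 h4, mul_pos h2 h3]


end
end
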